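/- Let f: ℝⁿ → ℝ be four times continuously differentiable and convex, with μ‖h‖⁴ ≤ D⁴f(z)[h]⁴ ≤ L‖h‖⁴ for all relevant z and h (quartic regularity, 0 ≤ μ ≤ L, Euclidean norm). Then for all x, y in the domain and all γ > 0: f(y) ≤ f(x) + ⟨∇f(x), y−x⟩ + ((3γ+1)/(6γ)) ∇²f(x)[y−x,y−x] + ((2γ+1)/24) L ‖y−x‖⁴. -/

import Mathlib

open Set

section Aux

lemma mono_deriv_nonneg {φ : ℝ → ℝ} (hm : Monotone φ) {t : ℝ}
    (hd : DifferentiableAt ℝ φ t) : 0 ≤ deriv φ t := by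
  have h := hd.hasDerivAt
  rw [hasDerivAt_iff_tendsto_slope] at h
  have h' : Filter.Tendsto (slope φ t) (nhdsWithin t (Ioi t)) (nhds (deriv φ t)) :=
    h.mono_left (nhdsWithin_mono t fun s hs => ne_of_gt hs)
  refine _root_.ge_of_tendsto h' ?_
  filter_upwards [self_mem_nhdsWithin] with s hs
  rw [slope_def_field]
  have hts : t < s := hs
  exact div_nonneg (by simpa using sub_nonneg.mpr (hm hts.le)) (by linarith)

lemma diff_iteratedDeriv {N : WithTop ℕ∞} {φ : ℝ → ℝ} (hφ : ContDiff ℝ N φ) {k : ℕ}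
    (hk : (k : WithTop ℕ∞) < N) : Differentiable ℝ (iteratedDeriv k φ) := by
  have : iteratedDeriv k φ = fun t =>
      (ContinuousMultilinearMap.apply ℝ (fun _ : Fin k => ℝ) ℝ (fun _ => 1))
        (iteratedFDeriv ℝ k φ t) := by
    funext t; rw [iteratedDeriv_eq_iteratedFDeriv]; rfl
  rw [this]
  exact (ContinuousMultilinearMap.apply ℝ (fun _ : Fin k => ℝ) ℝ
    (fun _ => 1)).differentiable.comp (hφ.differentiable_iteratedFDeriv hk)

lemma iterWithin_Icc {N : ℕ∞} {φ : ℝ → ℝ} (hφ : ContDiff ℝ N φ) {a b t : ℝ}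
    (hab : a < b) {k : ℕ} (hk : (k : ℕ∞) ≤ N) (ht : t ∈ Icc a b) :
    iteratedDerivWithin k φ (Icc a b) t = iteratedDeriv k φ t := by
  rw [iteratedDerivWithin_eq_iteratedFDerivWithin, iteratedDeriv_eq_iteratedFDeriv]
  congr 1
  have H : HasFTaylorSeriesUpToOn N φ (ftaylorSeries ℝ φ) (Icc a b) :=
    ((contDiff_iff_ftaylorSeries.mp hφ).hasFTaylorSeriesUpToOn univ).mono (subset_univ _)
  exact (H.eq_iteratedFDerivWithin_of_uniqueDiffOn (by exact_mod_cast hk) (uniqueDiffOn_Icc hab) ht).symm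

/-- Third-order Taylor with Lagrange remainder on `[0,1]`, for a `C⁴` function. -/
lemma taylor3 {ψ : ℝ → ℝ} (hψ : ContDiff ℝ 4 ψ) :
    ∃ c ∈ Ioo (0:ℝ) 1, ψ 1 = ψ 0 + iteratedDeriv 1 ψ 0 + iteratedDeriv 2 ψ 0 / 2
      + iteratedDeriv 3 ψ 0 / 6 + iteratedDeriv 4 ψ c / 24 := by
  have h01 : (0:ℝ) < 1 := one_pos
  have hcd : ContDiffOn ℝ 3 ψ (Icc 0 1) := (hψ.of_le (by norm_num)).contDiffOn
  have hdiff : DifferentiableOn ℝ (iteratedDerivWithin 3 ψ (Icc 0 1)) (Ioo 0 1) := by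
    apply ((diff_iteratedDeriv hψ (k := 3) (by norm_num)).differentiableOn (s := Ioo 0 1)).congr
    intro t ht
    exact iterWithin_Icc hψ h01 (by norm_num) (Ioo_subset_Icc_self ht)
  obtain ⟨c, hc, hEq⟩ := taylor_mean_remainder_lagrange (n := 3) h01.ne
    (by rwa [uIcc_of_le h01.le]) (by rwa [uIcc_of_le h01.le, uIoo_of_le h01.le])
  rw [uIoo_of_le h01.le] at hc
  rw [uIcc_of_le h01.le] at hEq
  refine ⟨c, hc, ?_⟩
  rw [taylor_within_apply] at hEq
  have e4 : iteratedDerivWithin 4 ψ (Icc 0 1) c = iteratedDeriv 4 ψ c :=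
    iterWithin_Icc hψ h01 (by norm_num) (Ioo_subset_Icc_self hc)
  have e0 : ∀ k : ℕ, k ≤ 4 → iteratedDerivWithin k ψ (Icc 0 1) 0 = iteratedDeriv k ψ 0 :=
    fun k hk => iterWithin_Icc hψ h01 (by exact_mod_cast hk) (by norm_num)
  simp only [Finset.sum_range_succ, Finset.sum_range_zero] at hEq
  rw [e4, e0 0 (by norm_num), e0 1 (by norm_num), e0 2 (by norm_num), e0 3 (by norm_num)] at hEq
  simp only [iteratedDeriv_zero, iteratedDeriv_one] at hEq ⊢
  norm_num [Nat.factorial] at hEq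
  linarith [hEq]

lemma iter_shift (ψ : ℝ → ℝ) (k : ℕ) :
    iteratedDeriv k (iteratedDeriv 2 ψ) = iteratedDeriv (k + 2) ψ := by
  simp only [iteratedDeriv_eq_iterate]
  funext t
  rw [Function.iterate_add_apply]

/-- First-order Taylor with Lagrange remainder on `[0,1]`, for the second derivative. -/
lemma taylor1 {ψ : ℝ → ℝ} (hψ : ContDiff ℝ 4 ψ) :
    ∃ c ∈ Ioo (0:ℝ) 1, iteratedDeriv 2 ψ 1 = iteratedDeriv 2 ψ 0 + iteratedDeriv 3 ψ 0
      + iteratedDeriv 4 ψ c / 2 := by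
  have h01 : (0:ℝ) < 1 := one_pos
  set φ := iteratedDeriv 2 ψ with hφdef
  have hφ : ContDiff ℝ 2 φ := by
    have hrepr : φ = fun t =>
        (ContinuousMultilinearMap.apply ℝ (fun _ : Fin 2 => ℝ) ℝ (fun _ => 1))
          (iteratedFDeriv ℝ 2 ψ t) := by
      funext t; rw [hφdef, iteratedDeriv_eq_iteratedFDeriv]; rfl
    rw [hrepr]
    exact (ContinuousMultilinearMap.apply ℝ (fun _ : Fin 2 => ℝ) ℝ
      (fun _ => 1)).contDiff.comp (hψ.iteratedFDeriv_right (by norm_num))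
  have hcd : ContDiffOn ℝ 1 φ (Icc 0 1) := (hφ.of_le (by norm_num)).contDiffOn
  have hdiff : DifferentiableOn ℝ (iteratedDerivWithin 1 φ (Icc 0 1)) (Ioo 0 1) := by
    apply ((diff_iteratedDeriv hφ (k := 1) (by norm_num)).differentiableOn (s := Ioo 0 1)).congr
    intro t ht
    exact iterWithin_Icc hφ h01 (by norm_num) (Ioo_subset_Icc_self ht)
  obtain ⟨c, hc, hEq⟩ := taylor_mean_remainder_lagrange (n := 1) h01.ne
    (by rwa [uIcc_of_le h01.le]) (by rwa [uIcc_of_le h01.le, uIoo_of_le h01.le])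
  rw [uIoo_of_le h01.le] at hc
  rw [uIcc_of_le h01.le] at hEq
  refine ⟨c, hc, ?_⟩
  rw [taylor_within_apply] at hEq
  have e2 : iteratedDerivWithin 2 φ (Icc 0 1) c = iteratedDeriv 2 φ c :=
    iterWithin_Icc hφ h01 (by norm_num) (Ioo_subset_Icc_self hc)
  have e0 : ∀ k : ℕ, k ≤ 2 → iteratedDerivWithin k φ (Icc 0 1) 0 = iteratedDeriv k φ 0 :=
    fun k hk => iterWithin_Icc hφ h01 (by exact_mod_cast hk) (by norm_num)
  simp only [Finset.sum_range_succ, Finset.sum_range_zero] at hEq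
  rw [e2, e0 0 (by norm_num), e0 1 (by norm_num)] at hEq
  have r1 : deriv φ 0 = iteratedDeriv 3 ψ 0 := by
    rw [← iteratedDeriv_one, hφdef, iter_shift ψ 1]
  have r2 : iteratedDeriv 2 φ c = iteratedDeriv 4 ψ c := by rw [hφdef, iter_shift ψ 2]
  simp only [iteratedDeriv_zero, iteratedDeriv_one] at hEq ⊢
  rw [r1, r2] at hEq
  norm_num [Nat.factorial] at hEq
  linarith [hEq]

variable {E : Type*} [NormedAddCommGroup E] [NormedSpace ℝ E]

lemma iter_line (f : E → ℝ) (hf : ContDiff ℝ 4 f) (x h : E) :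
    ∀ k : ℕ, k ≤ 4 → ∀ t : ℝ,
      iteratedDeriv k (fun s : ℝ => f (x + s • h)) t
        = iteratedFDeriv ℝ k f (x + t • h) (fun _ => h) := by
  intro k
  induction k with
  | zero => intro _ t; simp [iteratedFDeriv_zero_apply]
  | succ k IH =>
    intro hk t
    rw [iteratedDeriv_succ]
    have heq : iteratedDeriv k (fun s : ℝ => f (x + s • h))
        = fun s => iteratedFDeriv ℝ k f (x + s • h) (fun _ => h) :=
      funext fun s => IH (by omega) s
    rw [heq]
    have hc : HasDerivAt (fun s : ℝ => x + s • h) h t := by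
      simpa using ((hasDerivAt_id t).smul_const h).const_add x
    have hdF : HasFDerivAt (iteratedFDeriv ℝ k f)
        (fderiv ℝ (iteratedFDeriv ℝ k f) (x + t • h)) (x + t • h) :=
      ((hf.differentiable_iteratedFDeriv
        (by exact_mod_cast (by omega : k < 4))) (x + t • h)).hasFDerivAt
    have hcomp : HasDerivAt (fun s : ℝ => iteratedFDeriv ℝ k f (x + s • h))
        (fderiv ℝ (iteratedFDeriv ℝ k f) (x + t • h) h) t := hdF.comp_hasDerivAt t hc
    have happ : HasDerivAt (fun s : ℝ => iteratedFDeriv ℝ k f (x + s • h) (fun _ => h))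
        ((fderiv ℝ (iteratedFDeriv ℝ k f) (x + t • h) h) (fun _ => h)) t :=
      ((ContinuousMultilinearMap.apply ℝ (fun _ : Fin k => E) ℝ
        (fun _ => h)).hasFDerivAt.comp_hasDerivAt t hcomp)
    rw [happ.deriv, iteratedFDeriv_succ_apply_left]
    rfl

lemma line_contDiff (f : E → ℝ) (hf : ContDiff ℝ 4 f) (x h : E) :
    ContDiff ℝ 4 (fun t : ℝ => f (x + t • h)) :=
  hf.comp (contDiff_const.add (contDiff_id.smul contDiff_const))

/-- Convexity gives a nonnegative second directional derivative. -/
lemma second_nonneg (f : E → ℝ) (hf : ContDiff ℝ 4 f)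
    (hconv : ConvexOn ℝ Set.univ f) (z v : E) :
    0 ≤ iteratedFDeriv ℝ 2 f z (fun _ => v) := by
  set q : ℝ → ℝ := fun t => f (z + t • v) with hq
  have hqc : ContDiff ℝ 4 q := line_contDiff f hf z v
  have hqconv : ConvexOn ℝ Set.univ q := by
    have := hconv.comp_affineMap (AffineMap.lineMap z (z + v))
    simpa [hq, Function.comp_def, AffineMap.lineMap_apply, add_comm, vsub_eq_sub,
      add_sub_cancel_left] using this
  have hmono : Monotone (deriv q) := by
    have := hqconv.monotoneOn_deriv fun t _ =>
      (hqc.differentiable (by norm_num)).differentiableAt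
    rwa [← monotoneOn_univ]
  have hdq : deriv (deriv q) 0 = iteratedFDeriv ℝ 2 f z (fun _ => v) := by
    have h2 := iter_line f hf z v 2 (by norm_num) 0
    rw [iteratedDeriv_succ, iteratedDeriv_one] at h2
    simpa using h2
  have hdiff1 : DifferentiableAt ℝ (deriv q) 0 := by
    have hd := (diff_iteratedDeriv hqc
      (show ((1:ℕ) : WithTop ℕ∞) < 4 by exact_mod_cast (by norm_num : (1:ℕ) < 4))) 0
    rwa [iteratedDeriv_one] at hd
  exact hdq ▸ mono_deriv_nonneg hmono hdiff1

lemma scale_dir (f : E → ℝ) (k : ℕ) (z : E) (a : ℝ) (h : E) :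
    iteratedFDeriv ℝ k f z (fun _ : Fin k => a • h)
      = a ^ k * iteratedFDeriv ℝ k f z (fun _ => h) := by
  have := (iteratedFDeriv ℝ k f z).map_smul_univ (fun _ : Fin k => a) (fun _ => h)
  simpa [Finset.prod_const, smul_eq_mul] using this

end Aux

/-- Upper growth bound for a convex, C⁴, quartic-regular function:
if `μ‖h‖⁴ ≤ D⁴f(z)[h]⁴ ≤ L‖h‖⁴` for all `z, h`, then for all `x, y` and `γ > 0`:
`f(y) ≤ f(x) + ⟨∇f(x),y−x⟩ + ((3γ+1)/(6γ))∇²f(x)[y−x]² + ((2γ+1)/24)L‖y−x‖⁴`. -/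
theorem qregular_upper_bound {n : ℕ}
    (f : EuclideanSpace ℝ (Fin n) → ℝ) (μ L : ℝ)
    (hμL : 0 ≤ μ ∧ μ ≤ L)
    (hf : ContDiff ℝ 4 f)
    (hconv : ConvexOn ℝ Set.univ f)
    (hlow : ∀ (z h : EuclideanSpace ℝ (Fin n)),
      μ * ‖h‖ ^ 4 ≤ iteratedFDeriv ℝ 4 f z ![h, h, h, h])
    (hup : ∀ (z h : EuclideanSpace ℝ (Fin n)),
      iteratedFDeriv ℝ 4 f z ![h, h, h, h] ≤ L * ‖h‖ ^ 4)
    (x y : EuclideanSpace ℝ (Fin n)) (γ : ℝ) (hγ : 0 < γ) :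
    f y ≤ f x + fderiv ℝ f x (y - x)
      + ((3 * γ + 1) / (6 * γ)) * iteratedFDeriv ℝ 2 f x ![y - x, y - x]
      + ((2 * γ + 1) / 24) * L * ‖y - x‖ ^ 4 := by
  set h : EuclideanSpace ℝ (Fin n) := y - x with hh
  have hv2 : (![h, h] : Fin 2 → EuclideanSpace ℝ (Fin n)) = fun _ => h := by
    funext i; fin_cases i <;> rfl
  have hv4 : ∀ v : EuclideanSpace ℝ (Fin n),
      (![v, v, v, v] : Fin 4 → EuclideanSpace ℝ (Fin n)) = fun _ => v := by
    intro v; funext i; fin_cases i <;> rfl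
  set K : ℝ := L * ‖h‖ ^ 4 with hK
  set D2 : ℝ := iteratedFDeriv ℝ 2 f x (fun _ => h) with hD2
  set D3 : ℝ := iteratedFDeriv ℝ 3 f x (fun _ => h) with hD3
  -- Taylor expansion along the segment [x, y]
  have hg : ContDiff ℝ 4 (fun t : ℝ => f (x + t • h)) := line_contDiff f hf x h
  obtain ⟨c, hc, hT⟩ := taylor3 hg
  have hT0 : ∀ k : ℕ, k ≤ 4 → iteratedDeriv k (fun t : ℝ => f (x + t • h)) 0
      = iteratedFDeriv ℝ k f x (fun _ => h) := by
    intro k hk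
    have := iter_line f hf x h k hk 0
    simpa using this
  have hTc := iter_line f hf x h 4 le_rfl c
  have hgy : f (x + (1:ℝ) • h) = f y := by simp [hh]
  have hgx : f (x + (0:ℝ) • h) = f x := by simp
  rw [hgy, hgx, hT0 1 (by norm_num), hT0 2 (by norm_num), hT0 3 (by norm_num), hTc] at hT
  have hR : iteratedFDeriv ℝ 4 f (x + c • h) (fun _ => h) ≤ K := by
    have := hup (x + c • h) h
    rwa [hv4 h] at this
  have h1 : iteratedFDeriv ℝ 1 f x (fun _ => h) = fderiv ℝ f x h := by
    rw [show (fun _ : Fin 1 => h) = ![h] from by funext i; fin_cases i <;> rfl,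
      iteratedFDeriv_one_apply]
    rfl
  -- Second expansion toward x - γ h
  set w : EuclideanSpace ℝ (Fin n) := (-γ) • h with hw
  have hg2 : ContDiff ℝ 4 (fun t : ℝ => f (x + t • w)) := line_contDiff f hf x w
  obtain ⟨c₂, hc₂, hT2⟩ := taylor1 hg2
  have hW0 : ∀ k : ℕ, k ≤ 4 → iteratedDeriv k (fun t : ℝ => f (x + t • w)) 0
      = iteratedFDeriv ℝ k f x (fun _ => w) := by
    intro k hk
    have := iter_line f hf x w k hk 0
    simpa using this
  have hW1 : iteratedDeriv 2 (fun t : ℝ => f (x + t • w)) 1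
      = iteratedFDeriv ℝ 2 f (x + w) (fun _ => w) := by
    have := iter_line f hf x w 2 (by norm_num) 1
    simpa using this
  have hWc := iter_line f hf x w 4 le_rfl c₂
  have hpos : 0 ≤ iteratedFDeriv ℝ 2 f (x + w) (fun _ => w) :=
    second_nonneg f hf hconv (x + w) w
  have hs2 : iteratedFDeriv ℝ 2 f x (fun _ => w) = γ ^ 2 * D2 := by
    rw [hw, scale_dir f 2 x (-γ) h, hD2]; ring_nf
  have hs3 : iteratedFDeriv ℝ 3 f x (fun _ => w) = -(γ ^ 3) * D3 := by
    rw [hw, scale_dir f 3 x (-γ) h, hD3]; ring_nf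
  have hs4 : iteratedFDeriv ℝ 4 f (x + c₂ • w) (fun _ => w)
      = γ ^ 4 * iteratedFDeriv ℝ 4 f (x + c₂ • w) (fun _ => h) := by
    rw [hw, scale_dir f 4 (x + c₂ • w) (-γ) h]; ring_nf; rfl
  have hR2 : iteratedFDeriv ℝ 4 f (x + c₂ • w) (fun _ => h) ≤ K := by
    have := hup (x + c₂ • w) h
    rwa [hv4 h] at this
  rw [hW1, hW0 2 (by norm_num), hW0 3 (by norm_num), hWc, hs2, hs3, hs4] at hT2
  -- Derive the third-derivative bound
  have key : 0 ≤ γ ^ 2 * D2 - γ ^ 3 * D3 + γ ^ 4 * K / 2 := by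
    have h4 : (0:ℝ) ≤ γ ^ 4 := by positivity
    nlinarith [hpos, hT2, hR2]
  have hD3bound : D3 ≤ D2 / γ + γ * K / 2 := by
    have hγ3 : (0:ℝ) < γ ^ 3 := by positivity
    have he : γ ^ 3 * (D2 / γ + γ * K / 2) = γ ^ 2 * D2 + γ ^ 4 * K / 2 := by
      field_simp
    have h1' : γ ^ 3 * D3 ≤ γ ^ 3 * (D2 / γ + γ * K / 2) := by rw [he]; linarith
    exact le_of_mul_le_mul_left h1' hγ3
  -- Put everything together
  rw [hv2]
  rw [h1] at hT
  have e1 : (3 * γ + 1) / (6 * γ) * D2 = D2 / 2 + D2 / γ / 6 := by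
    field_simp; ring
  have e2 : (2 * γ + 1) / 24 * L * ‖h‖ ^ 4 = γ * K / 12 + K / 24 := by
    rw [hK]; ring
  rw [e1, e2]
  linarith [hT, hD3bound, hR]
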